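/- RTB is sound with respect to B-frames: if a hypersequent H is derivable in RTB, then H has no countermodel on any reflexive symmetric Kripke frame. -/

import Mathlib

inductive Fm where
  | atom : ℕ → Fm
  | neg : Fm → Fm
  | and : Fm → Fm → Fm
  | or : Fm → Fm → Fm
  | box : Fm → Fm
deriving DecidableEq

/-- Classical Kripke satisfaction. -/
def Sat {W : Type} (R : W → W → Prop) (v : W → ℕ → Prop) : Fm → W → Prop
  | .atom n, x => v x n
  | .neg φ, x => ¬ Sat R v φ x
  | .and φ ψ, x => Sat R v φ x ∧ Sat R v ψ x
  | .or φ ψ, x => Sat R v φ x ∨ Sat R v ψ x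
  | .box φ, x => ∀ y, R x y → Sat R v φ y

/-- A sequent is a pair of finite sets of formulas. -/
abbrev HSeq := Finset Fm × Finset Fm
/-- A hypersequent is a finite list of sequents. -/
abbrev Hyp := List HSeq

/-- Hypersequent derivability, parametrized by which optional rules are present:
`cut` = the Cut rule, `ec` = external contraction, `ew` = insertion of an empty
sequent anywhere, `sym` = reversal of the hypersequent, `t` = the T rule. The
base rules (Id, EWL, EWR, TL, TR, ¬, ∧, ∨, □L, □R) are always present. -/
inductive Der (cut ec ew sym t : Bool) : Hyp → Prop
  | id (n : ℕ) : Der cut ec ew sym t [({Fm.atom n}, {Fm.atom n})]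
  | cutR (hc : cut = true) (G H : Hyp) (Γ Δ : Finset Fm) (φ : Fm) :
      Der cut ec ew sym t (G ++ [(Γ, insert φ Δ)] ++ H) →
      Der cut ec ew sym t (G ++ [(insert φ Γ, Δ)] ++ H) →
      Der cut ec ew sym t (G ++ [(Γ, Δ)] ++ H)
  | ewl (G : Hyp) : Der cut ec ew sym t G → Der cut ec ew sym t ((∅, ∅) :: G)
  | ewr (G : Hyp) : Der cut ec ew sym t G → Der cut ec ew sym t (G ++ [(∅, ∅)])
  | tl (G H : Hyp) (Γ Δ : Finset Fm) (φ : Fm) :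
      Der cut ec ew sym t (G ++ [(Γ, Δ)] ++ H) →
      Der cut ec ew sym t (G ++ [(insert φ Γ, Δ)] ++ H)
  | tr (G H : Hyp) (Γ Δ : Finset Fm) (φ : Fm) :
      Der cut ec ew sym t (G ++ [(Γ, Δ)] ++ H) →
      Der cut ec ew sym t (G ++ [(Γ, insert φ Δ)] ++ H)
  | negL (G H : Hyp) (Γ Δ : Finset Fm) (φ : Fm) :
      Der cut ec ew sym t (G ++ [(Γ, insert φ Δ)] ++ H) →
      Der cut ec ew sym t (G ++ [(insert (.neg φ) Γ, Δ)] ++ H)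
  | negR (G H : Hyp) (Γ Δ : Finset Fm) (φ : Fm) :
      Der cut ec ew sym t (G ++ [(insert φ Γ, Δ)] ++ H) →
      Der cut ec ew sym t (G ++ [(Γ, insert (.neg φ) Δ)] ++ H)
  | andL1 (G H : Hyp) (Γ Δ : Finset Fm) (φ ψ : Fm) :
      Der cut ec ew sym t (G ++ [(insert φ Γ, Δ)] ++ H) →
      Der cut ec ew sym t (G ++ [(insert (.and φ ψ) Γ, Δ)] ++ H)
  | andL2 (G H : Hyp) (Γ Δ : Finset Fm) (φ ψ : Fm) :
      Der cut ec ew sym t (G ++ [(insert ψ Γ, Δ)] ++ H) →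
      Der cut ec ew sym t (G ++ [(insert (.and φ ψ) Γ, Δ)] ++ H)
  | andR (G H : Hyp) (Γ Δ : Finset Fm) (φ ψ : Fm) :
      Der cut ec ew sym t (G ++ [(Γ, insert φ Δ)] ++ H) →
      Der cut ec ew sym t (G ++ [(Γ, insert ψ Δ)] ++ H) →
      Der cut ec ew sym t (G ++ [(Γ, insert (.and φ ψ) Δ)] ++ H)
  | orL (G H : Hyp) (Γ Δ : Finset Fm) (φ ψ : Fm) :
      Der cut ec ew sym t (G ++ [(insert φ Γ, Δ)] ++ H) →
      Der cut ec ew sym t (G ++ [(insert ψ Γ, Δ)] ++ H) →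
      Der cut ec ew sym t (G ++ [(insert (.or φ ψ) Γ, Δ)] ++ H)
  | orR1 (G H : Hyp) (Γ Δ : Finset Fm) (φ ψ : Fm) :
      Der cut ec ew sym t (G ++ [(Γ, insert φ Δ)] ++ H) →
      Der cut ec ew sym t (G ++ [(Γ, insert (.or φ ψ) Δ)] ++ H)
  | orR2 (G H : Hyp) (Γ Δ : Finset Fm) (φ ψ : Fm) :
      Der cut ec ew sym t (G ++ [(Γ, insert ψ Δ)] ++ H) →
      Der cut ec ew sym t (G ++ [(Γ, insert (.or φ ψ) Δ)] ++ H)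
  | boxL (G H : Hyp) (Γ Δ Sg Λ : Finset Fm) (φ : Fm) :
      Der cut ec ew sym t (G ++ [(Γ, Δ), (insert φ Sg, Λ)] ++ H) →
      Der cut ec ew sym t (G ++ [(insert (.box φ) Γ, Δ), (Sg, Λ)] ++ H)
  | boxR (G : Hyp) (Γ Δ : Finset Fm) (φ : Fm) :
      Der cut ec ew sym t (G ++ [(Γ, Δ), (∅, {φ})]) →
      Der cut ec ew sym t (G ++ [(Γ, insert (.box φ) Δ)])
  | ecR (he : ec = true) (G H : Hyp) (Γ Δ : Finset Fm) :
      Der cut ec ew sym t (G ++ [(Γ, Δ), (Γ, Δ)] ++ H) →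
      Der cut ec ew sym t (G ++ [(Γ, Δ)] ++ H)
  | ewRule (he : ew = true) (G H : Hyp) :
      Der cut ec ew sym t (G ++ H) →
      Der cut ec ew sym t (G ++ [(∅, ∅)] ++ H)
  | symRule (hs : sym = true) (G : Hyp) :
      Der cut ec ew sym t G → Der cut ec ew sym t G.reverse
  | tRule (ht : t = true) (G H : Hyp) (Γ Δ : Finset Fm) (φ : Fm) :
      Der cut ec ew sym t (G ++ [(insert φ Γ, Δ)] ++ H) →
      Der cut ec ew sym t (G ++ [(insert (.box φ) Γ, Δ)] ++ H)

/-- RTB: Id, Cut, EWL, EWR, TL, TR, rules for ¬,∧,∨, □L, □R, Sym and the T rule. -/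
abbrev RTB : Hyp → Prop := Der true false false true true

/-- A point refutes a sequent: all antecedent formulas true, all succedent formulas false. -/
def Refutes {W : Type} (R : W → W → Prop) (v : W → ℕ → Prop) (S : HSeq) (w : W) : Prop :=
  (∀ φ ∈ S.1, Sat R v φ w) ∧ (∀ φ ∈ S.2, ¬ Sat R v φ w)

/-- A branch of R-related points starting at `w` countermodels the hypersequent. -/
def Counter {W : Type} (R : W → W → Prop) (v : W → ℕ → Prop) : Hyp → W → Prop
  | [], _ => True
  | [S], w => Refutes R v S w
  | S :: S' :: rest, w => Refutes R v S w ∧ ∃ w', R w w' ∧ Counter R v (S' :: rest) w'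


section Aux
variable {W : Type} {R : W → W → Prop} {v : W → ℕ → Prop}

lemma forall2_append_rev {α β} {P : α → β → Prop} {G K : List α} {as bs : List β}
    (h1 : List.Forall₂ P G as) (h2 : List.Forall₂ P K bs) :
    List.Forall₂ P (G ++ K) (as ++ bs) := by
  induction h1 with
  | nil => simpa
  | cons h _ ih => exact List.Forall₂.cons h ih

lemma forall2_split {α β} {P : α → β → Prop} :
    ∀ {G K : List α} {ws : List β}, List.Forall₂ P (G ++ K) ws →
      ∃ as bs, ws = as ++ bs ∧ List.Forall₂ P G as ∧ List.Forall₂ P K bs := by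
  intro G
  induction G with
  | nil => intro K ws h; exact ⟨[], ws, rfl, List.Forall₂.nil, h⟩
  | cons S G ih =>
      intro K ws h
      cases h with
      | cons hx h' =>
          obtain ⟨as, bs, rfl, h1, h2⟩ := ih h'
          exact ⟨_ :: as, bs, rfl, List.Forall₂.cons hx h1, h2⟩

lemma forall2_mid {α β} {P : α → β → Prop} {G K : List α} {S : α} {ws : List β}
    (h : List.Forall₂ P (G ++ [S] ++ K) ws) :
    ∃ as x bs, ws = as ++ x :: bs ∧ List.Forall₂ P G as ∧ P S x ∧ List.Forall₂ P K bs := by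
  obtain ⟨as, cs, rfl, h1, h2⟩ := forall2_split (G := G) (by simpa using h)
  cases h2 with
  | cons hx h' => exact ⟨as, _, _, rfl, h1, hx, h'⟩

lemma forall2_mid2 {α β} {P : α → β → Prop} {G K : List α} {S T : α} {ws : List β}
    (h : List.Forall₂ P (G ++ [S, T] ++ K) ws) :
    ∃ as x y bs, ws = as ++ x :: y :: bs ∧ List.Forall₂ P G as ∧ P S x ∧ P T y ∧
      List.Forall₂ P K bs := by
  obtain ⟨as, cs, rfl, h1, h2⟩ := forall2_split (G := G) (by simpa using h)
  cases h2 with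
  | cons hx h' =>
      cases h' with
      | cons hy h'' => exact ⟨as, _, _, _, rfl, h1, hx, hy, h''⟩

lemma refL {Γ Δ : Finset Fm} {φ : Fm} {w : W} :
    Refutes R v (insert φ Γ, Δ) w ↔ Sat R v φ w ∧ Refutes R v (Γ, Δ) w := by
  constructor
  · rintro ⟨h1, h2⟩
    exact ⟨h1 φ (Finset.mem_insert_self _ _),
      fun ψ hψ => h1 ψ (Finset.mem_insert_of_mem hψ), h2⟩
  · rintro ⟨hs, h1, h2⟩
    refine ⟨fun ψ hψ => ?_, h2⟩
    rcases Finset.mem_insert.mp hψ with rfl | hψ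
    · exact hs
    · exact h1 ψ hψ

lemma refR {Γ Δ : Finset Fm} {φ : Fm} {w : W} :
    Refutes R v (Γ, insert φ Δ) w ↔ ¬ Sat R v φ w ∧ Refutes R v (Γ, Δ) w := by
  constructor
  · rintro ⟨h1, h2⟩
    exact ⟨h2 φ (Finset.mem_insert_self _ _), h1,
      fun ψ hψ => h2 ψ (Finset.mem_insert_of_mem hψ)⟩
  · rintro ⟨hs, h1, h2⟩
    refine ⟨h1, fun ψ hψ => ?_⟩
    rcases Finset.mem_insert.mp hψ with rfl | hψ
    · exact hs
    · exact h2 ψ hψ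

lemma chain_mid_R {as bs : List W} {x y : W}
    (h : List.Chain' R (as ++ x :: y :: bs)) : R x y := by
  have := h.suffix ⟨as, rfl⟩
  exact (List.isChain_cons_cons.mp this).1

lemma chain_snoc {as : List W} {x y : W}
    (h : List.Chain' R (as ++ [x])) (hxy : R x y) :
    List.Chain' R (as ++ [x, y]) := by
  have : as ++ [x, y] = (as ++ [x]) ++ [y] := by simp
  rw [this]
  refine List.isChain_append.mpr ⟨h, List.isChain_singleton _, ?_⟩
  intro a ha b hb
  simp [List.getLast?_concat] at ha hb
  subst ha; subst hb; exact hxy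

lemma chain_init {as bs : List W} (h : List.Chain' R (as ++ bs)) :
    List.Chain' R as := (List.isChain_append.mp h).1

lemma sound_aux (refl : ∀ x, R x x) (symm : ∀ x y, R x y → R y x) :
    ∀ H : Hyp, RTB H → ∀ ws : List W, List.Forall₂ (Refutes R v) H ws →
      List.Chain' R ws → False := by
  intro H h
  induction h with
  | id n =>
      intro ws hf _
      cases hf with
      | cons hx h' =>
          exact hx.2 (Fm.atom n) (Finset.mem_singleton_self _)
            (hx.1 (Fm.atom n) (Finset.mem_singleton_self _))
  | cutR hc G K Γ Δ φ _ _ ih1 ih2 =>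
      intro ws hf hc'
      obtain ⟨as, x, bs, rfl, h1, hx, h2⟩ := forall2_mid hf
      by_cases hs : Sat R v φ x
      · exact ih2 _ (forall2_append_rev (forall2_append_rev h1
          (List.forall₂_cons.mpr ⟨refL.mpr ⟨hs, hx⟩, List.Forall₂.nil⟩)) h2 |>.imp
          (fun _ _ h => h) |> (by simpa using ·)) hc'
      · exact ih1 _ (by
          have := forall2_append_rev (forall2_append_rev h1
            (List.forall₂_cons.mpr ⟨refR.mpr ⟨hs, hx⟩, List.Forall₂.nil⟩)) h2
          simpa using this) hc'
  | ewl G _ ih =>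
      intro ws hf hc'
      cases hf with
      | cons _ h' => exact ih _ h' hc'.tail
  | ewr G _ ih =>
      intro ws hf hc'
      obtain ⟨as, bs, rfl, h1, _⟩ := forall2_split hf
      exact ih _ h1 (chain_init hc')
  | tl G K Γ Δ φ _ ih =>
      intro ws hf hc'
      obtain ⟨as, x, bs, rfl, h1, hx, h2⟩ := forall2_mid hf
      have hx' := (refL.mp hx).2
      exact ih _ (by
        have := forall2_append_rev (forall2_append_rev h1
          (List.forall₂_cons.mpr ⟨hx', List.Forall₂.nil⟩)) h2
        simpa using this) hc'
  | tr G K Γ Δ φ _ ih =>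
      intro ws hf hc'
      obtain ⟨as, x, bs, rfl, h1, hx, h2⟩ := forall2_mid hf
      have hx' := (refR.mp hx).2
      exact ih _ (by
        have := forall2_append_rev (forall2_append_rev h1
          (List.forall₂_cons.mpr ⟨hx', List.Forall₂.nil⟩)) h2
        simpa using this) hc'
  | negL G K Γ Δ φ _ ih =>
      intro ws hf hc'
      obtain ⟨as, x, bs, rfl, h1, hx, h2⟩ := forall2_mid hf
      obtain ⟨hs, hx'⟩ := refL.mp hx
      exact ih _ (by
        have := forall2_append_rev (forall2_append_rev h1
          (List.forall₂_cons.mpr ⟨refR.mpr ⟨hs, hx'⟩, List.Forall₂.nil⟩)) h2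
        simpa using this) hc'
  | negR G K Γ Δ φ _ ih =>
      intro ws hf hc'
      obtain ⟨as, x, bs, rfl, h1, hx, h2⟩ := forall2_mid hf
      obtain ⟨hs, hx'⟩ := refR.mp hx
      have hs' : Sat R v φ x := by
        by_contra hcon; exact hs hcon
      exact ih _ (by
        have := forall2_append_rev (forall2_append_rev h1
          (List.forall₂_cons.mpr ⟨refL.mpr ⟨hs', hx'⟩, List.Forall₂.nil⟩)) h2
        simpa using this) hc'
  | andL1 G K Γ Δ φ ψ _ ih =>
      intro ws hf hc'
      obtain ⟨as, x, bs, rfl, h1, hx, h2⟩ := forall2_mid hf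
      obtain ⟨hs, hx'⟩ := refL.mp hx
      exact ih _ (by
        have := forall2_append_rev (forall2_append_rev h1
          (List.forall₂_cons.mpr ⟨refL.mpr ⟨hs.1, hx'⟩, List.Forall₂.nil⟩)) h2
        simpa using this) hc'
  | andL2 G K Γ Δ φ ψ _ ih =>
      intro ws hf hc'
      obtain ⟨as, x, bs, rfl, h1, hx, h2⟩ := forall2_mid hf
      obtain ⟨hs, hx'⟩ := refL.mp hx
      exact ih _ (by
        have := forall2_append_rev (forall2_append_rev h1
          (List.forall₂_cons.mpr ⟨refL.mpr ⟨hs.2, hx'⟩, List.Forall₂.nil⟩)) h2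
        simpa using this) hc'
  | andR G K Γ Δ φ ψ _ _ ih1 ih2 =>
      intro ws hf hc'
      obtain ⟨as, x, bs, rfl, h1, hx, h2⟩ := forall2_mid hf
      obtain ⟨hs, hx'⟩ := refR.mp hx
      rcases not_and_or.mp hs with hs1 | hs2
      · exact ih1 _ (by
          have := forall2_append_rev (forall2_append_rev h1
            (List.forall₂_cons.mpr ⟨refR.mpr ⟨hs1, hx'⟩, List.Forall₂.nil⟩)) h2
          simpa using this) hc'
      · exact ih2 _ (by
          have := forall2_append_rev (forall2_append_rev h1
            (List.forall₂_cons.mpr ⟨refR.mpr ⟨hs2, hx'⟩, List.Forall₂.nil⟩)) h2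
          simpa using this) hc'
  | orL G K Γ Δ φ ψ _ _ ih1 ih2 =>
      intro ws hf hc'
      obtain ⟨as, x, bs, rfl, h1, hx, h2⟩ := forall2_mid hf
      obtain ⟨hs, hx'⟩ := refL.mp hx
      rcases hs with hs1 | hs2
      · exact ih1 _ (by
          have := forall2_append_rev (forall2_append_rev h1
            (List.forall₂_cons.mpr ⟨refL.mpr ⟨hs1, hx'⟩, List.Forall₂.nil⟩)) h2
          simpa using this) hc'
      · exact ih2 _ (by
          have := forall2_append_rev (forall2_append_rev h1
            (List.forall₂_cons.mpr ⟨refL.mpr ⟨hs2, hx'⟩, List.Forall₂.nil⟩)) h2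
          simpa using this) hc'
  | orR1 G K Γ Δ φ ψ _ ih =>
      intro ws hf hc'
      obtain ⟨as, x, bs, rfl, h1, hx, h2⟩ := forall2_mid hf
      obtain ⟨hs, hx'⟩ := refR.mp hx
      have hs1 : ¬ Sat R v φ x := fun h => hs (Or.inl h)
      exact ih _ (by
        have := forall2_append_rev (forall2_append_rev h1
          (List.forall₂_cons.mpr ⟨refR.mpr ⟨hs1, hx'⟩, List.Forall₂.nil⟩)) h2
        simpa using this) hc'
  | orR2 G K Γ Δ φ ψ _ ih =>
      intro ws hf hc'
      obtain ⟨as, x, bs, rfl, h1, hx, h2⟩ := forall2_mid hf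
      obtain ⟨hs, hx'⟩ := refR.mp hx
      have hs2 : ¬ Sat R v ψ x := fun h => hs (Or.inr h)
      exact ih _ (by
        have := forall2_append_rev (forall2_append_rev h1
          (List.forall₂_cons.mpr ⟨refR.mpr ⟨hs2, hx'⟩, List.Forall₂.nil⟩)) h2
        simpa using this) hc'
  | boxL G K Γ Δ Sg Λ φ _ ih =>
      intro ws hf hc'
      obtain ⟨as, x, y, bs, rfl, h1, hx, hy, h2⟩ := forall2_mid2 hf
      obtain ⟨hs, hx'⟩ := refL.mp hx
      have hRxy : R x y := chain_mid_R hc'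
      have hφy : Sat R v φ y := hs y hRxy
      exact ih _ (by
        have := forall2_append_rev (forall2_append_rev h1
          (List.forall₂_cons.mpr ⟨hx', List.forall₂_cons.mpr
            ⟨refL.mpr ⟨hφy, hy⟩, List.Forall₂.nil⟩⟩)) h2
        simpa using this) hc'
  | boxR G Γ Δ φ _ ih =>
      intro ws hf hc'
      obtain ⟨as, cs, rfl, h1, h2⟩ := forall2_split hf
      obtain ⟨x, hx, h2⟩ : ∃ x, Refutes R v (Γ, insert (Fm.box φ) Δ) x ∧ cs = [x] := by
        cases h2 with
        | cons hx h2' => cases h2'; exact ⟨_, hx, rfl⟩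
      subst h2
      obtain ⟨hs, hx'⟩ := refR.mp hx
      have : ∃ y, R x y ∧ ¬ Sat R v φ y := by
        by_contra hcon
        push_neg at hcon
        exact hs (fun y hy => hcon y hy)
      obtain ⟨y, hRxy, hφy⟩ := this
      have hy : Refutes R v ((∅ : Finset Fm), ({φ} : Finset Fm)) y := by
        refine ⟨fun ψ hψ => by simp at hψ, fun ψ hψ => ?_⟩
        rcases Finset.mem_singleton.mp hψ with rfl
        exact hφy
      refine ih (as ++ [x, y]) ?_ (chain_snoc hc' hRxy)
      have := forall2_append_rev h1 (List.forall₂_cons.mpr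
        ⟨hx', List.forall₂_cons.mpr ⟨hy, List.Forall₂.nil⟩⟩)
      simpa using this
  | ecR he => simp at he
  | ewRule he => simp at he
  | symRule hs G _ ih =>
      intro ws hf hc'
      have hf' : List.Forall₂ (Refutes R v) G ws.reverse := by
        have := List.forall₂_reverse_iff.mpr hf
        simpa using this
      have hc'' : List.Chain' R ws.reverse :=
        List.isChain_reverse.mpr (hc'.imp fun a b hab => symm a b hab)
      exact ih _ hf' hc''
  | tRule ht G K Γ Δ φ _ ih =>
      intro ws hf hc'
      obtain ⟨as, x, bs, rfl, h1, hx, h2⟩ := forall2_mid hf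
      obtain ⟨hs, hx'⟩ := refL.mp hx
      have hφx : Sat R v φ x := hs x (refl x)
      exact ih _ (by
        have := forall2_append_rev (forall2_append_rev h1
          (List.forall₂_cons.mpr ⟨refL.mpr ⟨hφx, hx'⟩, List.Forall₂.nil⟩)) h2
        simpa using this) hc'

lemma counter_wit :
    ∀ (T : Hyp) (S : HSeq) (w : W), Counter R v (S :: T) w →
      ∃ ws, List.Forall₂ (Refutes R v) (S :: T) (w :: ws) ∧ List.Chain' R (w :: ws) := by
  intro T
  induction T with
  | nil =>
      intro S w hC
      exact ⟨[], List.forall₂_cons.mpr ⟨hC, List.Forall₂.nil⟩, List.isChain_singleton _⟩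
  | cons S' rest ih =>
      intro S w hC
      obtain ⟨hS, w', hR, hC'⟩ := hC
      obtain ⟨ws, h1, h2⟩ := ih S' w' hC'
      exact ⟨w' :: ws, List.forall₂_cons.mpr ⟨hS, h1⟩, List.isChain_cons_cons.mpr ⟨hR, h2⟩⟩

end Aux

/-- RTB is sound with respect to B-frames: a derivable
hypersequent has no countermodel on any reflexive symmetric Kripke frame. -/
theorem RTB_sound_B :
    ∀ H : Hyp, RTB H →
      ∀ (W : Type) (R : W → W → Prop) (v : W → ℕ → Prop),
        (∀ x, R x x) → (∀ x y, R x y → R y x) →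
        ∀ w : W, ¬ Counter R v H w := by
  intro H h W R v refl symm w hC
  cases H with
  | nil => exact sound_aux (v := v) refl symm [] h [] List.Forall₂.nil List.isChain_nil
  | cons S T =>
      obtain ⟨ws, h1, h2⟩ := counter_wit T S w hC
      exact sound_aux refl symm _ h _ h1 h2
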